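/- Let G = (U, V, E) be a complete bipartite multigraph with |U| = |V| (each pair u ∈ U, v ∈ V joined by both a red and a blue edge), and let L₁, L₂ : U ∪ V → {0,1} be two labelings. Suppose ||{u ∈ U : L₁(u) = L₂(u)}| − |{v ∈ V : L₁(v) = L₂(v)}|| = t. Then there exists a perfect matching M of G such that every edge of M is consistent with L₁ and exactly t edges of M violate L₂. -/

import Mathlib

open Finset

lemma exists_sigma {n : ℕ} (S : Finset (Fin n)) :
    ∃ σ : Equiv.Perm (Fin n), ∀ u, u ∈ S ↔ (σ u : ℕ) < S.card := by
  have hcard : S.card + Sᶜ.card = n := by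
    simpa using S.card_add_card_compl
  let e1 : {x // x ∈ S} ≃ Fin S.card := S.equivFin
  let e2 : {x // x ∉ S} ≃ Fin Sᶜ.card :=
    (Equiv.subtypeEquivRight (fun x => by simp)).trans (Sᶜ.equivFin)
  let σ : Equiv.Perm (Fin n) :=
    (Equiv.sumCompl (· ∈ S)).symm.trans
      (((e1.sumCongr e2).trans finSumFinEquiv).trans (finCongr hcard))
  refine ⟨σ, fun u => ?_⟩
  by_cases h : u ∈ S
  · simp only [σ, Equiv.trans_apply, Equiv.sumCompl_symm_apply_of_pos (p := (· ∈ S)) h,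
      Equiv.sumCongr_apply, Sum.map_inl, finSumFinEquiv_apply_left, finCongr_apply,
      Fin.coe_cast, Fin.coe_castAdd]
    simpa [h] using (e1 ⟨u, h⟩).isLt
  · simp only [σ, Equiv.trans_apply, Equiv.sumCompl_symm_apply_of_neg (p := (· ∈ S)) h,
      Equiv.sumCongr_apply, Sum.map_inr, finSumFinEquiv_apply_right, finCongr_apply,
      Fin.coe_cast, Fin.coe_natAdd]
    simp [h]

lemma count_fin_band {n a b : ℕ} (hb : b ≤ n) (hab : a ≤ b)
    (p : Fin n → Prop) [DecidablePred p]
    (hp : ∀ k, p k ↔ ¬((k : ℕ) < a ↔ (k : ℕ) < b)) :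
    (univ.filter p).card = b - a := by
  rw [← Nat.card_Ico a b]
  refine Finset.card_bij (fun k _ => (k : ℕ)) ?_ ?_ ?_
  · intro k hk; simp only [mem_filter, mem_univ, true_and, hp] at hk
    simp only [Finset.mem_Ico]; omega
  · intro k _ k' _ h; exact Fin.val_injective h
  · intro k hk
    simp only [Finset.mem_Ico] at hk
    refine ⟨⟨k, by omega⟩, ?_, rfl⟩
    simp only [mem_filter, mem_univ, true_and, hp]; omega

lemma exists_perm {n : ℕ} (S T : Finset (Fin n)) :
    ∃ π : Equiv.Perm (Fin n),
      (univ.filter (fun u => ¬(u ∈ S ↔ π u ∈ T))).card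
        = ((S.card : ℤ) - T.card).natAbs := by
  obtain ⟨σS, hσS⟩ := exists_sigma S
  obtain ⟨σT, hσT⟩ := exists_sigma T
  refine ⟨σS.trans σT.symm, ?_⟩
  have key : ∀ u : Fin n, (¬(u ∈ S ↔ (σS.trans σT.symm) u ∈ T)) ↔
      ¬((σS u : ℕ) < S.card ↔ (σS u : ℕ) < T.card) := by
    intro u
    rw [hσS u, hσT]
    simp
  have hSn : S.card ≤ n := by simpa using S.card_le_univ
  have hTn : T.card ≤ n := by simpa using T.card_le_univ
  have habs : ((S.card : ℤ) - T.card).natAbs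
      = max S.card T.card - min S.card T.card := by omega
  rw [habs, ← Nat.card_Ico (min S.card T.card) (max S.card T.card)]
  refine Finset.card_bij (fun u _ => (σS u : ℕ)) ?_ ?_ ?_
  · intro u hu
    simp only [mem_filter, mem_univ, true_and, key] at hu
    simp only [Finset.mem_Ico]; omega
  · intro u _ u' _ h
    exact σS.injective (Fin.val_injective h)
  · intro k hk
    simp only [Finset.mem_Ico] at hk
    have hkn : k < n := by omega
    refine ⟨σS.symm ⟨k, hkn⟩, ?_, by simp⟩
    simp only [mem_filter, mem_univ, true_and, key, Equiv.apply_symm_apply]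
    omega

/-- In the complete bipartite multigraph on `U = V = Fin n` (every pair joined by
both a red and a blue edge; a perfect matching is given by a permutation `π`
together with a color choice `c`, `c u = true` meaning the red copy of
`(u, π u)` is used): if the two labelings `L₁ = (L1U, L1V)` and
`L₂ = (L2U, L2V)` agree on `t` more vertices on one side than on the other, then
there is a perfect matching all of whose edges are consistent with `L₁`
(red edges join equal labels, blue edges join different labels) and exactly `t`
of whose edges violate `L₂`. -/
theorem stmt9 (n : ℕ) (L1U L1V L2U L2V : Fin n → Bool) (t : ℕ)
    (ht : ((Finset.univ.filter (fun u => L1U u = L2U u)).card -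
            (Finset.univ.filter (fun v => L1V v = L2V v)).card : ℤ).natAbs = t) :
    ∃ (π : Equiv.Perm (Fin n)) (c : Fin n → Bool),
      (∀ u, (c u = true ∧ L1U u = L1V (π u)) ∨ (c u = false ∧ L1U u ≠ L1V (π u))) ∧
      (Finset.univ.filter (fun u =>
        (c u = false ∧ L2U u = L2V (π u)) ∨ (c u = true ∧ L2U u ≠ L2V (π u)))).card
        = t := by
  obtain ⟨π, hπ⟩ := exists_perm (univ.filter (fun u => L1U u = L2U u))
    (univ.filter (fun v => L1V v = L2V v))
  refine ⟨π, fun u => decide (L1U u = L1V (π u)), ?_, ?_⟩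
  · intro u
    by_cases h : L1U u = L1V (π u) <;> simp [h]
  · rw [← ht, ← hπ]
    apply congrArg Finset.card
    apply Finset.filter_congr
    intro u _
    simp only [mem_filter, mem_univ, true_and, eq_iff_iff]
    cases h1 : L1U u <;> cases h2 : L2U u <;> cases h3 : L1V (π u) <;> cases h4 : L2V (π u) <;>
      simp [h1, h2, h3, h4]
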